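/- Let 0 = (0,…,0) ∈ ℕ^d. The map ℕ^d → ℕ^d sending a = (a_1,…,a_d) to g^a(0) := g_1^{a_1} ∘ ⋯ ∘ g_d^{a_d}(0) is a bijection; that is, for every x ∈ ℕ^d there exists a unique a ∈ ℕ^d with g^a(0) = x. -/

import Mathlib

namespace Spiral

/-- The size `n(x) = n₁ + ⋯ + n_d` of a configuration `x ∈ ℕ^d`. -/
def size {d : ℕ} (x : Fin d → ℕ) : ℕ := ∑ i, x i

/-- The weight `W(x) = Σ_{i<j} (max(0, x_j − x_i) + max(0, x_i − x_j − 1))`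
(truncated ℕ-subtraction realizes the `max(0,·)`). -/
def weight {d : ℕ} (x : Fin d → ℕ) : ℕ :=
  ∑ i : Fin d, ∑ j : Fin d, if i < j then (x j - x i) + (x i - x j - 1) else 0

/-- The configuration `x` as a set of points of `[d] × ℕ`: the point `(i, n)` (seat `i`
0-indexed, level `n`) is encoded as the natural number `n*d + i`. The usual order on the
encodings is exactly the height order `≺` (height `h(i,n) = n + i/d`), and the spiral
shift `δ + s/d` is encoded as `+ s`. -/
def pts (d : ℕ) (x : Fin d → ℕ) : Finset ℕ :=
  Finset.image (fun i : Fin d => x i * d + i.val) Finset.univ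

/-- The points of `x` listed in increasing height order: `δ¹(x), …, δ^d(x)`. -/
def sortedPts (d : ℕ) (x : Fin d → ℕ) : List ℕ :=
  (pts d x).sort (· ≤ ·)

/-- The lowest point strictly above `p` (along the spiral) whose seat lies in `S`. -/
noncomputable def nextPt (d : ℕ) (S : Finset ℕ) (p : ℕ) : ℕ :=
  sInf {q : ℕ | p < q ∧ q % d ∈ S}

/-- The spiral shifting operator `g_j` (for `1 ≤ j ≤ d`): it fixes the lowest `j - 1`
points `δ¹(x), …, δ^{j-1}(x)` and moves each remaining point `δ^k(x)` (`k ≥ j`) to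
`δ^k(x) + s_k/d`, where `s_k` is the minimal positive integer such that the seat of
`δ^k(x) + s_k/d` lies in `{i(δ^j(x)), …, i(δ^d(x))}`. The resulting configuration is read
off from the new point set (which has exactly one point per seat). -/
noncomputable def gOp (d : ℕ) (j : ℕ) (x : Fin d → ℕ) : Fin d → ℕ := fun i =>
  let L := sortedPts d x
  let low := L.take (j - 1)
  let high := L.drop (j - 1)
  let S : Finset ℕ := high.toFinset.image (· % d)
  let Q : Finset ℕ := low.toFinset ∪ (high.map (nextPt d S)).toFinset
  ∑ q ∈ Q.filter (fun q => q % d = i.val), q / d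

/-- `g^a := g₁^{a₁} ∘ ⋯ ∘ g_d^{a_d}` (here `a i` is the exponent of `g_{i+1}`). -/
noncomputable def gIter (d : ℕ) (a : Fin d → ℕ) (x : Fin d → ℕ) : Fin d → ℕ :=
  (List.finRange d).foldr (fun j y => (gOp d (j.val + 1))^[a j] y) x

end Spiral

namespace SpiralProof
open Spiral

lemma list_toFinset_map (l : List ℕ) (f : ℕ → ℕ) :
    (l.map f).toFinset = l.toFinset.image f := by
  ext a; simp

lemma enc_mod {d : ℕ} (x : Fin d → ℕ) (i : Fin d) : (x i * d + i.val) % d = i.val := by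
  rw [Nat.mul_add_mod']; exact Nat.mod_eq_of_lt i.isLt

lemma enc_div {d : ℕ} (hd : 0 < d) (x : Fin d → ℕ) (i : Fin d) :
    (x i * d + i.val) / d = x i := by
  rw [Nat.add_comm, Nat.add_mul_div_right _ _ hd, Nat.div_eq_of_lt i.isLt, Nat.zero_add]

lemma enc_inj {d : ℕ} (x : Fin d → ℕ) :
    Function.Injective (fun i : Fin d => x i * d + i.val) := by
  intro i j h
  have hm : i.val = j.val := by
    have := congrArg (· % d) h
    simpa [enc_mod, Nat.mod_eq_of_lt i.isLt, Nat.mod_eq_of_lt j.isLt] using this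
  exact Fin.ext hm

lemma mem_pts {d : ℕ} {x : Fin d → ℕ} {q : ℕ} :
    q ∈ pts d x ↔ ∃ i : Fin d, x i * d + i.val = q := by
  simp [pts]

lemma pts_image_mod {d : ℕ} (hd : 0 < d) (x : Fin d → ℕ) :
    (pts d x).image (· % d) = Finset.range d := by
  ext r
  simp only [Finset.mem_image, Finset.mem_range, mem_pts]
  constructor
  · rintro ⟨q, ⟨i, rfl⟩, rfl⟩
    rw [enc_mod]; exact i.isLt
  · intro hr
    exact ⟨x ⟨r, hr⟩ * d + r, ⟨⟨r, hr⟩, rfl⟩, enc_mod x ⟨r, hr⟩⟩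

lemma nextPt_univ {d : ℕ} (hd : 0 < d) (p : ℕ) :
    nextPt d (Finset.range d) p = p + 1 := by
  have hmem : p + 1 ∈ {q : ℕ | p < q ∧ q % d ∈ Finset.range d} :=
    ⟨Nat.lt_succ_self p, Finset.mem_range.2 (Nat.mod_lt _ hd)⟩
  refine le_antisymm (Nat.sInf_le hmem) ?_
  exact (Nat.sInf_mem ⟨_, hmem⟩).1

lemma sortedPts_toFinset {d : ℕ} (x : Fin d → ℕ) : (sortedPts d x).toFinset = pts d x :=
  Finset.sort_toFinset _ _

/-- The rotation operator : explicit form of `g₁`. -/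
def rot {d : ℕ} (x : Fin (d+1) → ℕ) : Fin (d+1) → ℕ :=
  Fin.cases (x (Fin.last d) + 1) (fun i => x i.castSucc)

/-- Lemma A : `g₁` is the rotation. -/
lemma gOp_one {d : ℕ} (x : Fin (d+1) → ℕ) : gOp (d+1) 1 x = rot x := by
  funext i
  have hd : 0 < d + 1 := Nat.succ_pos d
  show ∑ q ∈ Finset.filter _ _, q / (d+1) = _
  have hQ : (List.take 0 (sortedPts (d+1) x)).toFinset ∪
      ((List.drop 0 (sortedPts (d+1) x)).map
        (nextPt (d+1) ((List.drop 0 (sortedPts (d+1) x)).toFinset.image (· % (d+1))))).toFinset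
      = (pts (d+1) x).image (· + 1) := by
    rw [List.take_zero, List.drop_zero, list_toFinset_map, sortedPts_toFinset,
      pts_image_mod hd]
    simp only [List.toFinset_nil]
    rw [Finset.empty_union]
    congr 1
    funext p
    exact nextPt_univ hd p
  rw [hQ, pts, Finset.image_image, Finset.filter_image, Finset.sum_image (by
    intro a _ b _ h
    exact enc_inj x (Nat.succ_injective (by simpa using h))), Finset.sum_filter]
  have key : ∀ k : Fin (d+1), ((x k * (d+1) + k.val) + 1) % (d+1) = (k.val + 1) % (d+1) ∧
      ((x k * (d+1) + k.val) + 1) / (d+1) = x k + (k.val + 1) / (d+1) := by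
    intro k
    constructor
    · rw [Nat.add_assoc, Nat.mul_add_mod']
    · rw [Nat.add_assoc, Nat.add_comm, Nat.add_mul_div_right _ _ hd]
      exact Nat.add_comm _ _
  induction i using Fin.cases with
  | zero =>
    rw [Finset.sum_eq_single (Fin.last d)]
    · have h0 : ((fun q => q + 1) ∘ fun i => x i * (d+1) + i.val) (Fin.last d) % (d+1)
          = (0 : Fin (d+1)).val := by
        show (x (Fin.last d) * (d+1) + (Fin.last d).val + 1) % (d+1) = (0 : Fin (d+1)).val
        rw [(key (Fin.last d)).1, Fin.val_last, Nat.mod_self, Fin.val_zero]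
      rw [if_pos h0]
      show (x (Fin.last d) * (d+1) + (Fin.last d).val + 1) / (d+1) = rot x 0
      rw [(key (Fin.last d)).2, Fin.val_last, Nat.div_self hd]
      simp [rot]
    · intro b _ hne
      rw [if_neg]
      simp only [Function.comp_apply, (key b).1, Fin.val_zero]
      intro hmod
      have hb : b.val + 1 < d + 1 := by
        have h1 := b.isLt
        rcases Nat.lt_or_ge (b.val + 1) (d+1) with h | h
        · exact h
        · exact absurd (Fin.ext (by rw [Fin.val_last]; omega) : b = Fin.last d) hne
      rw [Nat.mod_eq_of_lt hb] at hmod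
      simp at hmod
    · intro h; exact absurd (Finset.mem_univ _) h
  | succ i' =>
    rw [Finset.sum_eq_single i'.castSucc]
    · have h1 : i'.castSucc.val + 1 < d + 1 := by
        have := i'.isLt; rw [Fin.coe_castSucc]; omega
      have h0 : ((fun q => q + 1) ∘ fun i => x i * (d+1) + i.val) i'.castSucc % (d+1)
          = i'.succ.val := by
        show (x i'.castSucc * (d+1) + i'.castSucc.val + 1) % (d+1) = i'.succ.val
        rw [(key i'.castSucc).1, Nat.mod_eq_of_lt h1, Fin.val_succ, Fin.coe_castSucc]
      rw [if_pos h0]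
      show (x i'.castSucc * (d+1) + i'.castSucc.val + 1) / (d+1) = rot x i'.succ
      rw [(key i'.castSucc).2, Nat.div_eq_of_lt h1, Nat.add_zero]
      simp [rot]
    · intro b _ hne
      rw [if_neg]
      simp only [Function.comp_apply, (key b).1, Fin.val_succ]
      intro hmod
      rcases Nat.lt_or_ge (b.val + 1) (d+1) with h | h
      · rw [Nat.mod_eq_of_lt h] at hmod
        exact hne (Fin.ext (by rw [Fin.coe_castSucc]; omega))
      · have hbv : b.val + 1 = d + 1 := by have := b.isLt; omega
        rw [hbv, Nat.mod_self] at hmod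
        have := i'.isLt
        omega
    · intro h; exact absurd (Finset.mem_univ _) h


/-! ### The embedding of dimension `n` into dimension `n+1` -/

/-- Order embedding of the `n`-spiral into the `(n+1)`-spiral (onto seats `1..n`). -/
def phi (n q : ℕ) : ℕ := q + q / n + 1

lemma phi_eq {n : ℕ} (a : ℕ) {b : ℕ} (hb : b < n) : phi n (a * n + b) = a * (n+1) + (b+1) := by
  have hn : 0 < n := Nat.lt_of_le_of_lt (Nat.zero_le b) hb
  unfold phi
  rw [Nat.add_comm (a*n) b, Nat.add_mul_div_right _ _ hn, Nat.div_eq_of_lt hb, Nat.zero_add]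
  ring

lemma phi_strictMono (n : ℕ) : StrictMono (phi n) := by
  intro q q' h
  unfold phi
  have := Nat.div_le_div_right (c := n) (Nat.le_of_lt h)
  omega

lemma phi_pos (n q : ℕ) : 0 < phi n q := Nat.succ_pos _

lemma phi_decomp {n : ℕ} (hn : 0 < n) (q : ℕ) : phi n q = (q / n) * (n+1) + (q % n + 1) := by
  conv_lhs => rw [← Nat.div_add_mod q n, Nat.mul_comm n (q/n)]
  exact phi_eq _ (Nat.mod_lt _ hn)

lemma phi_mod {n : ℕ} (hn : 0 < n) (q : ℕ) : phi n q % (n+1) = q % n + 1 := by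
  rw [phi_decomp hn, Nat.mul_add_mod']
  exact Nat.mod_eq_of_lt (by have := Nat.mod_lt q (show 0 < n by omega); omega)

lemma phi_div {n : ℕ} (hn : 0 < n) (q : ℕ) : phi n q / (n+1) = q / n := by
  rw [phi_decomp hn, Nat.add_comm, Nat.add_mul_div_right _ _ (Nat.succ_pos n),
    Nat.div_eq_of_lt (by have := Nat.mod_lt q (show 0 < n by omega); omega), Nat.zero_add]

lemma phi_surj {n r : ℕ} (hn : 0 < n) (hr : r % (n+1) ≠ 0) : ∃ q, phi n q = r := by
  refine ⟨(r / (n+1)) * n + (r % (n+1) - 1), ?_⟩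
  have h1 : r % (n+1) - 1 < n := by have := Nat.mod_lt r (show 0 < n+1 by omega); omega
  rw [phi_eq _ h1]
  have : r % (n+1) - 1 + 1 = r % (n+1) := by omega
  rw [this, Nat.add_comm]
  exact Nat.mod_add_div' r (n+1)

/-- Embedding of configurations : seat 0 at level 0, seat `i+1` at level `y i`. -/
def emb {n : ℕ} (y : Fin n → ℕ) : Fin (n+1) → ℕ := Fin.cases 0 y

@[simp] lemma emb_zero {n : ℕ} (y : Fin n → ℕ) : emb y 0 = 0 := rfl
@[simp] lemma emb_succ {n : ℕ} (y : Fin n → ℕ) (i : Fin n) : emb y i.succ = y i := by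
  simp [emb]

lemma pts_emb {n : ℕ} (y : Fin n → ℕ) :
    pts (n+1) (emb y) = insert 0 ((pts n y).image (phi n)) := by
  ext q
  simp only [mem_pts, Finset.mem_insert, Finset.mem_image]
  constructor
  · rintro ⟨i, rfl⟩
    induction i using Fin.cases with
    | zero => left; simp
    | succ i' =>
      right
      refine ⟨y i' * n + i'.val, ⟨i', rfl⟩, ?_⟩
      rw [phi_eq _ i'.isLt]
      simp
  · rintro (rfl | ⟨r, ⟨i, rfl⟩, rfl⟩)
    · exact ⟨0, by simp⟩
    · refine ⟨i.succ, ?_⟩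
      rw [phi_eq _ i.isLt]
      simp


lemma sortedPts_length {n : ℕ} (y : Fin n → ℕ) : (sortedPts n y).length = n := by
  rw [sortedPts, Finset.length_sort, pts,
    Finset.card_image_of_injective _ (enc_inj y), Finset.card_univ, Fintype.card_fin]

lemma sortedPts_emb {n : ℕ} (y : Fin n → ℕ) :
    sortedPts (n+1) (emb y) = 0 :: (sortedPts n y).map (phi n) := by
  symm
  refine (fun hp h1 h2 => List.Perm.eq_of_pairwise' h1 h2 hp) ?_ ?_ (Finset.pairwise_sort _ _)
  · apply List.perm_of_nodup_nodup_toFinset_eq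
    · refine List.nodup_cons.2 ⟨?_, ?_⟩
      · intro h
        obtain ⟨q, _, hq⟩ := List.mem_map.1 h
        exact absurd hq.symm (Nat.ne_of_lt (phi_pos n q))
      · exact (Finset.sort_nodup _ _).map (phi_strictMono n).injective
    · exact Finset.sort_nodup _ _
    · rw [List.toFinset_cons, list_toFinset_map, sortedPts_toFinset, sortedPts_toFinset,
        pts_emb]
  · refine List.pairwise_cons.2 ⟨?_, ?_⟩
    · intro b _; exact Nat.zero_le b
    · exact List.pairwise_map.2 ((Finset.pairwise_sort _ _).imp
        (fun h => (phi_strictMono n).le_iff_le.2 h))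

lemma nextPt_conj {n : ℕ} (hn : 0 < n) {S : Finset ℕ} (hne : ∃ s ∈ S, s < n) (p : ℕ) :
    nextPt (n+1) (S.image (· + 1)) (phi n p) = phi n (nextPt n S p) := by
  obtain ⟨s, hs, hsn⟩ := hne
  have hA : ((p+1)*n + s) ∈ {q : ℕ | p < q ∧ q % n ∈ S} := by
    constructor
    · have : (p+1)*1 ≤ (p+1)*n := Nat.mul_le_mul_left _ hn
      omega
    · rw [Nat.mul_add_mod', Nat.mod_eq_of_lt hsn]; exact hs
  have hm := Nat.sInf_mem (⟨_, hA⟩ : Set.Nonempty {q : ℕ | p < q ∧ q % n ∈ S})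
  have hmB : phi n (nextPt n S p) ∈
      {q : ℕ | phi n p < q ∧ q % (n+1) ∈ S.image (· + 1)} :=
    ⟨phi_strictMono n hm.1, by
      rw [phi_mod hn]; exact Finset.mem_image.2 ⟨_, hm.2, rfl⟩⟩
  refine le_antisymm (Nat.sInf_le hmB) ?_
  have hBm := Nat.sInf_mem (⟨_, hmB⟩ :
    Set.Nonempty {q : ℕ | phi n p < q ∧ q % (n+1) ∈ S.image (· + 1)})
  obtain ⟨hlt, hmod⟩ := hBm
  obtain ⟨t, ht, htq⟩ := Finset.mem_image.1 hmod
  have hr0 : sInf {q : ℕ | phi n p < q ∧ q % (n+1) ∈ S.image (· + 1)} % (n+1) ≠ 0 := by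
    omega
  obtain ⟨q, hq⟩ := phi_surj hn hr0
  show phi n (nextPt n S p) ≤ sInf {q : ℕ | phi n p < q ∧ q % (n+1) ∈ S.image (· + 1)}
  rw [← hq] at hlt htq ⊢
  have hqt : q % n = t := by
    rw [phi_mod hn] at htq
    omega
  have hqA : q ∈ {q : ℕ | p < q ∧ q % n ∈ S} :=
    ⟨(phi_strictMono n).lt_iff_lt.1 hlt, hqt ▸ ht⟩
  exact (phi_strictMono n).le_iff_le.2 (Nat.sInf_le hqA)

/-- Lemma B : conjugation of `g_{j+1}` on the embedded configuration. -/
lemma gOp_conj {n j : ℕ} (hj1 : 1 ≤ j) (hj2 : j ≤ n) (y : Fin n → ℕ) :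
    gOp (n+1) (j+1) (emb y) = emb (gOp n j y) := by
  obtain ⟨j', rfl⟩ : ∃ j'', j = j'' + 1 := ⟨j - 1, by omega⟩
  have hn : 0 < n := by omega
  funext i
  show ∑ q ∈ Finset.filter _ _, q / (n+1) = _
  set Ls := sortedPts n y with hLs
  set lows := Ls.take j' with hlows
  set highs := Ls.drop j' with hhighs
  set Ss : Finset ℕ := highs.toFinset.image (· % n) with hSs
  have hhne : highs ≠ [] := by
    have : highs.length = n - j' := by rw [hhighs, List.length_drop, hLs, sortedPts_length]
    intro h
    rw [h] at this
    simp at this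
    omega
  have hSne : ∃ s ∈ Ss, s < n := by
    obtain ⟨q, hq⟩ := List.exists_mem_of_ne_nil _ hhne
    exact ⟨q % n, Finset.mem_image.2 ⟨q, by simpa using hq, rfl⟩, Nat.mod_lt _ hn⟩
  have htake : (sortedPts (n+1) (emb y)).take ((j'+1+1)-1) = 0 :: lows.map (phi n) := by
    rw [sortedPts_emb]
    show (0 :: (Ls.map (phi n))).take (j'+1) = _
    rw [List.take_succ_cons, List.map_take]
  have hdrop : (sortedPts (n+1) (emb y)).drop ((j'+1+1)-1) = highs.map (phi n) := by
    rw [sortedPts_emb]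
    show (0 :: (Ls.map (phi n))).drop (j'+1) = _
    rw [List.drop_succ_cons, List.map_drop]
  have hS : (((sortedPts (n+1) (emb y)).drop ((j'+1+1)-1)).toFinset).image (· % (n+1))
      = Ss.image (· + 1) := by
    rw [hdrop, list_toFinset_map, Finset.image_image, hSs, Finset.image_image]
    apply Finset.image_congr
    intro q _
    exact phi_mod hn q
  have hQ : ((sortedPts (n+1) (emb y)).take ((j'+1+1)-1)).toFinset ∪
      (((sortedPts (n+1) (emb y)).drop ((j'+1+1)-1)).map
        (nextPt (n+1) ((((sortedPts (n+1) (emb y)).drop ((j'+1+1)-1)).toFinset).image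
          (· % (n+1))))).toFinset
      = insert 0 ((lows.toFinset ∪ (highs.map (nextPt n Ss)).toFinset).image (phi n)) := by
    rw [hS, htake, hdrop, List.toFinset_cons, List.map_map]
    have hfun : (nextPt (n+1) (Ss.image (· + 1))) ∘ (phi n) = (phi n) ∘ (nextPt n Ss) := by
      funext p
      exact nextPt_conj hn hSne p
    rw [hfun, ← List.map_map, list_toFinset_map, list_toFinset_map, Finset.insert_union,
      ← Finset.image_union]
  rw [hQ]
  set Qs := lows.toFinset ∪ (highs.map (nextPt n Ss)).toFinset with hQs
  induction i using Fin.cases with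
  | zero =>
    rw [Finset.filter_insert, if_pos (by simp)]
    have hflt : (Qs.image (phi n)).filter (fun q => q % (n+1) = ((0 : Fin (n+1)) : ℕ)) = ∅ := by
      rw [Finset.filter_image]
      convert Finset.image_empty (phi n)
      rw [Finset.filter_eq_empty_iff]
      intro q _
      simp [phi_mod hn]
    rw [hflt]
    simp [emb]
  | succ i' =>
    rw [Finset.filter_insert, if_neg (by simp [Fin.val_succ])]
    rw [Finset.filter_image, Finset.sum_image (fun a _ b _ h => (phi_strictMono n).injective h)]
    have hcong : Qs.filter (fun q => phi n q % (n+1) = (i'.succ : ℕ))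
        = Qs.filter (fun q => q % n = (i' : ℕ)) := by
      apply Finset.filter_congr
      intro q _
      rw [phi_mod hn, Fin.val_succ]
      constructor <;> omega
    have hdivs : ∑ q ∈ Qs.filter (fun q => q % n = (i' : ℕ)), phi n q / (n+1)
        = ∑ q ∈ Qs.filter (fun q => q % n = (i' : ℕ)), q / n :=
      Finset.sum_congr rfl (fun q _ => phi_div hn q)
    rw [hcong, hdivs, emb_succ]
    rfl

/-! ### Iteration and the decomposition of `gIter` -/

lemma gOp_conj_iter {n j : ℕ} (hj1 : 1 ≤ j) (hj2 : j ≤ n) (y : Fin n → ℕ) (m : ℕ) :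
    (gOp (n+1) (j+1))^[m] (emb y) = emb ((gOp n j)^[m] y) := by
  induction m with
  | zero => rfl
  | succ m ih =>
    rw [Function.iterate_succ_apply', ih, gOp_conj hj1 hj2, Function.iterate_succ_apply']

lemma foldr_emb {n : ℕ} (a : Fin (n+1) → ℕ) (l : List (Fin n)) (z : Fin n → ℕ) :
    l.foldr (fun j y => (gOp (n+1) ((Fin.succ j).val + 1))^[a j.succ] y) (emb z)
      = emb (l.foldr (fun j y => (gOp n (j.val + 1))^[a j.succ] y) z) := by
  induction l with
  | nil => rfl
  | cons hd tl ih =>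
    rw [List.foldr_cons, List.foldr_cons, ih]
    have h1 : (Fin.succ hd).val + 1 = (hd.val + 1) + 1 := by rw [Fin.val_succ]
    rw [h1]
    exact gOp_conj_iter (by omega) (by have := hd.isLt; omega) _ _

lemma decomp {n : ℕ} (a : Fin (n+1) → ℕ) :
    gIter (n+1) a (fun _ => 0)
      = rot^[a 0] (emb (gIter n (fun i => a i.succ) (fun _ => 0))) := by
  have hbase : (fun _ => (0:ℕ) : Fin (n+1) → ℕ) = emb (fun _ => 0) := by
    funext i; induction i using Fin.cases <;> simp
  rw [gIter, List.finRange_succ, List.foldr_cons, List.foldr_map, hbase, foldr_emb,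
    ← (funext gOp_one : gOp (n+1) 1 = rot)]
  rfl

/-! ### The rotation operator and the minimum statistic -/

def invRot {d : ℕ} (x : Fin (d+1) → ℕ) : Fin (d+1) → ℕ :=
  Fin.lastCases (x 0 - 1) (fun i => x i.succ)

@[simp] lemma rot_zero {d : ℕ} (x : Fin (d+1) → ℕ) : rot x 0 = x (Fin.last d) + 1 := rfl
@[simp] lemma rot_succ {d : ℕ} (x : Fin (d+1) → ℕ) (i : Fin d) :
    rot x i.succ = x i.castSucc := by simp [rot]
@[simp] lemma invRot_last {d : ℕ} (x : Fin (d+1) → ℕ) : invRot x (Fin.last d) = x 0 - 1 := by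
  simp [invRot]
@[simp] lemma invRot_castSucc {d : ℕ} (x : Fin (d+1) → ℕ) (i : Fin d) :
    invRot x i.castSucc = x i.succ := by simp [invRot]

lemma invRot_rot {d : ℕ} (x : Fin (d+1) → ℕ) : invRot (rot x) = x := by
  funext i
  induction i using Fin.lastCases with
  | last => simp
  | cast i' => simp

lemma rot_invRot {d : ℕ} {x : Fin (d+1) → ℕ} (h : 1 ≤ x 0) : rot (invRot x) = x := by
  funext i
  induction i using Fin.cases with
  | zero => rw [rot_zero, invRot_last]; omega
  | succ i' => rw [rot_succ, invRot_castSucc]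

lemma pts_rot {d : ℕ} (x : Fin (d+1) → ℕ) :
    pts (d+1) (rot x) = (pts (d+1) x).image (· + 1) := by
  ext q
  simp only [mem_pts, Finset.mem_image]
  constructor
  · rintro ⟨i, rfl⟩
    induction i using Fin.cases with
    | zero =>
      refine ⟨x (Fin.last d) * (d+1) + (Fin.last d).val, ⟨Fin.last d, rfl⟩, ?_⟩
      rw [rot_zero, Fin.val_last, Fin.val_zero]
      ring
    | succ i' =>
      refine ⟨x i'.castSucc * (d+1) + i'.castSucc.val, ⟨i'.castSucc, rfl⟩, ?_⟩
      rw [rot_succ, Fin.val_succ, Fin.coe_castSucc]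
      ring
  · rintro ⟨r, ⟨i, rfl⟩, rfl⟩
    induction i using Fin.lastCases with
    | last =>
      refine ⟨0, ?_⟩
      rw [rot_zero, Fin.val_last, Fin.val_zero]
      ring
    | cast i' =>
      refine ⟨i'.succ, ?_⟩
      rw [rot_succ, Fin.val_succ, Fin.coe_castSucc]
      ring

noncomputable def mu {d : ℕ} (x : Fin (d+1) → ℕ) : ℕ := sInf {q : ℕ | q ∈ pts (d+1) x}

lemma pts_nonempty {d : ℕ} (x : Fin (d+1) → ℕ) :
    Set.Nonempty {q : ℕ | q ∈ pts (d+1) x} :=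
  ⟨x 0 * (d+1) + (0 : Fin (d+1)).val, mem_pts.2 ⟨0, rfl⟩⟩

lemma mu_rot {d : ℕ} (x : Fin (d+1) → ℕ) : mu (rot x) = mu x + 1 := by
  have hmem := Nat.sInf_mem (pts_nonempty x)
  refine le_antisymm (Nat.sInf_le ?_) ?_
  · show mu x + 1 ∈ pts (d+1) (rot x)
    rw [pts_rot]
    exact Finset.mem_image.2 ⟨_, hmem, rfl⟩
  · have hmem2 := Nat.sInf_mem (pts_nonempty (rot x))
    have : mu (rot x) ∈ pts (d+1) (rot x) := hmem2
    rw [pts_rot] at this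
    obtain ⟨r, hr, hrq⟩ := Finset.mem_image.1 this
    have : mu x ≤ r := Nat.sInf_le hr
    omega

lemma mu_emb {n : ℕ} (y : Fin n → ℕ) : mu (emb y) = 0 :=
  Nat.sInf_eq_zero.2 (Or.inl (mem_pts.2 ⟨0, by simp⟩))

lemma x0_of_mu_zero {d : ℕ} {x : Fin (d+1) → ℕ} (h : mu x = 0) : x 0 = 0 := by
  have h0 : (0:ℕ) ∈ pts (d+1) x := by
    rcases Nat.sInf_eq_zero.1 h with h' | h'
    · exact h'
    · exact absurd h' (Set.nonempty_iff_ne_empty.1 (pts_nonempty x))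
  obtain ⟨i, hi⟩ := mem_pts.1 h0
  have hiv : i.val = 0 := by omega
  have hxi : x i = 0 := by
    rcases Nat.mul_eq_zero.1 (by omega : x i * (d+1) = 0) with h' | h'
    · exact h'
    · omega
  have : i = 0 := Fin.ext (by rw [hiv, Fin.val_zero])
  rwa [this] at hxi

lemma x0_pos_of_mu_pos {d : ℕ} {x : Fin (d+1) → ℕ} (h : mu x ≠ 0) : 1 ≤ x 0 := by
  by_contra hc
  have hx0 : x 0 = 0 := by omega
  have : (0:ℕ) ∈ pts (d+1) x := mem_pts.2 ⟨0, by simp [hx0]⟩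
  exact h (Nat.eq_zero_of_le_zero (Nat.sInf_le this))

lemma mu_iter {d : ℕ} (m : ℕ) (z : Fin (d+1) → ℕ) : mu (rot^[m] z) = m + mu z := by
  induction m with
  | zero => simp
  | succ m ih => rw [Function.iterate_succ_apply', mu_rot, ih]; omega

lemma emb_injective {n : ℕ} : Function.Injective (emb (n := n)) := by
  intro y y' h
  funext i
  have := congrFun h i.succ
  simpa using this

/-! ### Main bijectivity -/

lemma rot_surj_aux {d : ℕ} : ∀ k (x : Fin (d+1) → ℕ), mu x = k →
    ∃ m y, rot^[m] (emb y) = x := by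
  intro k
  induction k with
  | zero =>
    intro x hx
    refine ⟨0, fun i => x i.succ, ?_⟩
    show emb _ = x
    have h0 := x0_of_mu_zero hx
    funext i
    induction i using Fin.cases with
    | zero => simp [h0]
    | succ i' => simp
  | succ k ihk =>
    intro x hx
    have hx0 : 1 ≤ x 0 := x0_pos_of_mu_pos (by omega)
    have hri : rot (invRot x) = x := rot_invRot hx0
    have hmu : mu (invRot x) = k := by
      have := mu_rot (invRot x)
      rw [hri] at this
      omega
    obtain ⟨m, y, hmy⟩ := ihk _ hmu
    exact ⟨m+1, y, by rw [Function.iterate_succ_apply', hmy, hri]⟩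

theorem main : ∀ n, Function.Bijective (fun a : Fin n → ℕ => gIter n a (fun _ => 0)) := by
  intro n
  induction n with
  | zero =>
    constructor
    · intro a b _
      funext i
      exact i.elim0
    · intro x
      exact ⟨x, funext fun i => i.elim0⟩
  | succ n ih =>
    constructor
    · intro a b hab
      simp only [decomp] at hab
      have h0 : a 0 = b 0 := by
        have := congrArg mu hab
        rw [mu_iter, mu_iter, mu_emb, mu_emb] at this
        omega
      rw [h0] at hab
      have hinj : Function.Injective (rot (d := n)) :=
        Function.LeftInverse.injective invRot_rot
      have hemb := (hinj.iterate (b 0)) hab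
      have htl := ih.1 (emb_injective hemb)
      funext i
      induction i using Fin.cases with
      | zero => exact h0
      | succ i' => exact congrFun htl i'
    · intro x
      obtain ⟨m, y, hxy⟩ := rot_surj_aux (mu x) x rfl
      obtain ⟨a', ha'⟩ := ih.2 y
      refine ⟨Fin.cons m a', ?_⟩
      simp only [decomp]
      have h1 : (fun i => (Fin.cons m a' : Fin (n+1) → ℕ) i.succ) = a' :=
        funext fun i => by simp
      rw [h1]
      simp only at ha'
      rw [ha', Fin.cons_zero, hxy]

end SpiralProof

open Spiral in
/-- The map `ℕ^d → ℕ^d` sending `a = (a₁,…,a_d)` to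
`g^a(0) := g₁^{a₁} ∘ ⋯ ∘ g_d^{a_d}(0,…,0)` is a bijection: for every `x ∈ ℕ^d` there is a
unique `a ∈ ℕ^d` with `g^a(0) = x`. -/
theorem statement5 (d : ℕ) (hd : 1 ≤ d) :
    Function.Bijective (fun a : Fin d → ℕ => gIter d a (fun _ => 0)) :=
  SpiralProof.main d
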